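/- For any δ ∈ (1,2] there exists a Banach space X such that every convex combination of slices of the unit ball B_X has diameter at least δ, and δ is the infimum of the diameters of convex combinations of slices of B_X (i.e., for every γ > δ there is a convex combination of slices of B_X of diameter less than γ). -/

import Mathlib

open Filter Topology

noncomputable section

/-- The slice `S(B_X, f, α) = {x ∈ B_X : f x > 1 - α}` of the closed unit ball. -/
def Slice (X : Type*) [NormedAddCommGroup X] [NormedSpace ℝ X]
    (f : X →L[ℝ] ℝ) (α : ℝ) : Set X :=
  {x ∈ Metric.closedBall (0 : X) 1 | 1 - α < f x}

/-- `C` is a convex combination of slices of the closed unit ball of `X`. -/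
def IsConvexCombOfSlices (X : Type*) [NormedAddCommGroup X] [NormedSpace ℝ X]
    (C : Set X) : Prop :=
  ∃ (n : ℕ), 0 < n ∧ ∃ (lam : Fin n → ℝ) (f : Fin n → X →L[ℝ] ℝ) (α : Fin n → ℝ),
    (∀ i, 0 ≤ lam i) ∧ (∑ i, lam i) = 1 ∧ (∀ i, ‖f i‖ = 1) ∧ (∀ i, 0 < α i) ∧
    C = {z : X | ∃ w : Fin n → X, (∀ i, w i ∈ Slice X (f i) (α i)) ∧ z = ∑ i, lam i • w i}

abbrev Bdd : Type := BoundedContinuousFunction ℕ ℝ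
def Esp (a : ℝ) : Type := ℝ × Bdd
instance {a : ℝ} : AddCommGroup (Esp a) := inferInstanceAs (AddCommGroup (ℝ × Bdd))
instance {a : ℝ} : Module ℝ (Esp a) := inferInstanceAs (Module ℝ (ℝ × Bdd))

instance EspNACG (a : ℝ) : NormedAddCommGroup (Esp a) :=
  AddGroupNorm.toNormedAddCommGroup
  { toFun := fun x => max |x.1| (|a| * |x.1| + ‖x.2‖)
    map_zero' := by show max |(0:ℝ)| (|a| * |(0:ℝ)| + ‖(0 : Bdd)‖) = 0; simp
    add_le' := fun x y => by
      have h1 : |x.1 + y.1| ≤ |x.1| + |y.1| := abs_add_le _ _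
      have h2 : ‖x.2 + y.2‖ ≤ ‖x.2‖ + ‖y.2‖ := norm_add_le _ _
      have h3 : |a| * |x.1 + y.1| ≤ |a| * |x.1| + |a| * |y.1| := by nlinarith [abs_nonneg a]
      simp only [max_le_iff]
      constructor
      · exact h1.trans (add_le_add (le_max_left _ _) (le_max_left _ _))
      · calc |a| * |x.1 + y.1| + ‖x.2 + y.2‖ ≤ (|a| * |x.1| + ‖x.2‖) + (|a| * |y.1| + ‖y.2‖) := by
              linarith
          _ ≤ _ := add_le_add (le_max_right _ _) (le_max_right _ _)
    neg' := fun x => by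
      show max |(-x).1| (|a| * |(-x).1| + ‖(-x).2‖) = _
      have e1 : (-x).1 = -x.1 := rfl
      have e2 : (-x).2 = -x.2 := rfl
      rw [e1, e2, abs_neg, norm_neg]
    eq_zero_of_map_eq_zero' := fun x hx => by
      have hu : |x.1| ≤ 0 := hx ▸ le_max_left _ _
      have hv : |a| * |x.1| + ‖x.2‖ ≤ 0 := hx ▸ le_max_right _ _
      have hx1 : x.1 = 0 := abs_nonpos_iff.mp hu
      have hx2 : x.2 = 0 := norm_le_zero_iff.mp (by nlinarith [mul_nonneg (abs_nonneg a) (abs_nonneg x.1)])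
      show (x.1, x.2) = ((0 : ℝ), (0 : Bdd))
      rw [hx1, hx2] }

lemma Esp.norm_def {a : ℝ} (x : Esp a) : ‖x‖ = max |x.1| (|a| * |x.1| + ‖x.2‖) := rfl

instance EspNS (a : ℝ) : NormedSpace ℝ (Esp a) where
  norm_smul_le r x := by
    rw [Esp.norm_def, Esp.norm_def]
    have e1 : (r • x).1 = r * x.1 := rfl
    have e2 : (r • x).2 = r • x.2 := rfl
    rw [e1, e2, abs_mul, norm_smul r x.2, Real.norm_eq_abs, mul_max_of_nonneg _ _ (abs_nonneg r)]
    exact max_le_max le_rfl (le_of_eq (by ring))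

namespace Esp
variable {a : ℝ}

lemma abs_fst_le (x : Esp a) : |x.1| ≤ ‖x‖ := le_max_left _ _

lemma norm_snd_le (x : Esp a) : ‖x.2‖ ≤ ‖x‖ := by
  have : |a| * |x.1| + ‖x.2‖ ≤ ‖x‖ := le_max_right _ _
  nlinarith [mul_nonneg (abs_nonneg a) (abs_nonneg x.1)]

lemma norm_le (x : Esp a) : ‖x‖ ≤ (1 + |a|) * max |x.1| ‖x.2‖ := by
  rw [Esp.norm_def]
  have h1 : |x.1| ≤ max |x.1| ‖x.2‖ := le_max_left _ _
  have h2 : ‖x.2‖ ≤ max |x.1| ‖x.2‖ := le_max_right _ _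
  have h3 : (0:ℝ) ≤ max |x.1| ‖x.2‖ := le_trans (abs_nonneg _) h1
  apply max_le
  · nlinarith [abs_nonneg a]
  · nlinarith [abs_nonneg a]

instance complete (a : ℝ) : CompleteSpace (Esp a) := by
  apply Metric.complete_of_cauchySeq_tendsto
  intro u hu
  set v : ℕ → ℝ × Bdd := fun n => ((u n : Esp a) : ℝ × Bdd) with hv
  have hdist : ∀ m n, dist (v m) (v n) ≤ dist (u m) (u n) := by
    intro m n
    rw [Prod.dist_eq, dist_eq_norm (u m) (u n)]
    apply max_le
    · rw [Real.dist_eq]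
      exact abs_fst_le (u m - u n)
    · rw [dist_eq_norm]
      exact norm_snd_le (u m - u n)
  have hvC : CauchySeq v := by
    rw [Metric.cauchySeq_iff] at hu ⊢
    intro ε hε
    obtain ⟨N, hN⟩ := hu ε hε
    exact ⟨N, fun m hm n hn => lt_of_le_of_lt (hdist m n) (hN m hm n hn)⟩
  obtain ⟨L, hL⟩ := cauchySeq_tendsto_of_complete hvC
  refine ⟨(L : Esp a), ?_⟩
  rw [Metric.tendsto_atTop] at hL; refine Metric.tendsto_atTop.mpr ?_
  intro ε hε
  have hpos : (0:ℝ) < 1 + |a| := by positivity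
  obtain ⟨N, hN⟩ := hL (ε / (1 + |a|)) (by positivity)
  refine ⟨N, fun n hn => ?_⟩
  have h1 : dist (u n) (L : Esp a) ≤ (1 + |a|) * dist (v n) L := by
    rw [dist_eq_norm (E := Esp a) (u n) L, Prod.dist_eq]
    refine le_trans (norm_le _) ?_
    apply mul_le_mul_of_nonneg_left _ (le_of_lt hpos)
    apply max_le
    · exact le_trans (le_of_eq (Real.dist_eq (v n).1 L.1).symm) (le_max_left _ _)
    · exact le_trans (le_of_eq (dist_eq_norm (v n).2 L.2).symm) (le_max_right _ _)
  calc dist (u n) (L : Esp a) ≤ (1 + |a|) * dist (v n) L := h1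
    _ < (1 + |a|) * (ε / (1 + |a|)) := by
        apply mul_lt_mul_of_pos_left (hN n hn) hpos
    _ = ε := by field_simp

end Esp

def embL (a : ℝ) : Bdd →ₗ[ℝ] Esp a where
  toFun y := ((0, y) : ℝ × Bdd)
  map_add' y z := by change ((0, y + z) : ℝ × Bdd) = ((0:ℝ) + 0, y + z); rw [add_zero]
  map_smul' r y := by change ((0, r • y) : ℝ × Bdd) = (r • (0:ℝ), r • y); rw [smul_zero]

@[simp] lemma embL_fst {a : ℝ} (y : Bdd) : (embL a y).1 = 0 := rfl
@[simp] lemma embL_snd {a : ℝ} (y : Bdd) : (embL a y).2 = y := rfl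

lemma norm_embL {a : ℝ} (y : Bdd) : ‖embL a y‖ = ‖y‖ := by
  rw [Esp.norm_def, embL_fst, embL_snd]
  simp [norm_nonneg y]

/-- the n-th coordinate vector in `Bdd` -/
def eV (n : ℕ) : Bdd :=
  BoundedContinuousFunction.ofNormedAddCommGroupDiscrete (fun m => if m = n then (1:ℝ) else 0) 1
    (by intro m; dsimp; split <;> simp)

@[simp] lemma eV_apply (n m : ℕ) : eV n m = if m = n then (1:ℝ) else 0 := rfl

lemma eV_norm (n : ℕ) : ‖eV n‖ = 1 := by
  apply le_antisymm
  · rw [BoundedContinuousFunction.norm_le zero_le_one]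
    intro m
    rw [Real.norm_eq_abs, eV_apply]
    split <;> simp
  · have := (eV n).norm_coe_le_norm n
    rw [eV_apply] at this
    simpa using this

/-- all coordinate functionals of a continuous functional tend to zero -/
lemma tendsto_coord {a : ℝ} (g : Esp a →L[ℝ] ℝ) :
    Filter.Tendsto (fun n => |g (embL a (eV n))|) Filter.atTop (nhds 0) := by
  set c : ℕ → ℝ := fun n => g (embL a (eV n)) with hc
  have key : ∀ F : Finset ℕ, ∑ n ∈ F, |c n| ≤ ‖g‖ := by
    intro F
    set s : ℕ → ℝ := fun n => if 0 ≤ c n then 1 else -1 with hs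
    have hsc : ∀ n, s n * c n = |c n| := by
      intro n
      by_cases h : 0 ≤ c n
      · simp [hs, h, abs_of_nonneg h]
      · push_neg at h
        simp [hs, not_le.mpr h, abs_of_neg h]
    set y : Bdd := ∑ n ∈ F, s n • eV n with hy
    have hyn : ‖y‖ ≤ 1 := by
      rw [BoundedContinuousFunction.norm_le zero_le_one]
      intro m
      have hval : y m = ∑ n ∈ F, s n * (if m = n then (1:ℝ) else 0) := by
        rw [hy]
        simp [BoundedContinuousFunction.coe_sum, Finset.sum_apply]
      rw [Real.norm_eq_abs, hval]
      have : ∑ n ∈ F, s n * (if m = n then (1:ℝ) else 0) = if m ∈ F then s m else 0 := by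
        rw [Finset.sum_congr rfl (fun n _ => by rw [mul_ite, mul_one, mul_zero])]
        simp [Finset.sum_ite_eq' F m s, eq_comm]
      rw [this]
      split
      · by_cases h : 0 ≤ c m <;> simp [hs, h]
      · simp
    have hgy : g (embL a y) = ∑ n ∈ F, s n * c n := by
      rw [hy, map_sum, map_sum]
      congr 1
      ext n
      rw [map_smul, map_smul, smul_eq_mul]
    calc ∑ n ∈ F, |c n| = g (embL a y) := by rw [hgy]; exact (Finset.sum_congr rfl fun n _ => (hsc n).symm)
      _ ≤ |g (embL a y)| := le_abs_self _
      _ ≤ ‖g‖ * ‖embL a y‖ := by rw [← Real.norm_eq_abs]; exact g.le_opNorm _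
      _ ≤ ‖g‖ * 1 := by
          apply mul_le_mul_of_nonneg_left _ (norm_nonneg g)
          rw [norm_embL]; exact hyn
      _ = ‖g‖ := mul_one _
  have hsum : Summable fun n => |c n| :=
    summable_of_sum_range_le (fun n => abs_nonneg _) (fun n => key (Finset.range n))
  exact hsum.tendsto_atTop_zero

lemma mem_slice_iff {X : Type*} [NormedAddCommGroup X] [NormedSpace ℝ X]
    (f : X →L[ℝ] ℝ) (α : ℝ) (x : X) : x ∈ Slice X f α ↔ ‖x‖ ≤ 1 ∧ 1 - α < f x := by
  simp [Slice, Metric.mem_closedBall, dist_zero_right]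

lemma slice_nonempty {X : Type*} [NormedAddCommGroup X] [NormedSpace ℝ X]
    (f : X →L[ℝ] ℝ) (hf : ‖f‖ = 1) {α : ℝ} (hα : 0 < α) : ∃ x, x ∈ Slice X f α := by
  have h1 : (1 : ℝ) - α < ‖f‖ := by rw [hf]; linarith
  obtain ⟨x, hx1, hx2⟩ := f.exists_lt_apply_of_lt_opNorm h1
  rcases le_or_gt 0 (f x) with h | h
  · exact ⟨x, (mem_slice_iff f α x).mpr ⟨hx1.le, by rwa [Real.norm_eq_abs, abs_of_nonneg h] at hx2⟩⟩
  · refine ⟨-x, (mem_slice_iff f α (-x)).mpr ⟨by rw [norm_neg]; exact hx1.le, ?_⟩⟩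
    rw [map_neg]
    rwa [Real.norm_eq_abs, abs_of_neg h] at hx2

/-- the first-coordinate functional -/
def fstL (a : ℝ) : Esp a →L[ℝ] ℝ :=
  LinearMap.mkContinuous
    { toFun := fun x => x.1, map_add' := fun _ _ => rfl, map_smul' := fun _ _ => rfl } 1
    (fun x => by
      rw [Real.norm_eq_abs, one_mul]
      exact Esp.abs_fst_le x)

@[simp] lemma fstL_apply {a : ℝ} (x : Esp a) : fstL a x = x.1 := rfl

def onePt (a : ℝ) : Esp a := ((1, 0) : ℝ × Bdd)

lemma one_zero_norm {a : ℝ} (ha : |a| ≤ 1) : ‖onePt a‖ = 1 := by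
  rw [Esp.norm_def]
  show max |(1:ℝ)| (|a| * |(1:ℝ)| + ‖(0 : Bdd)‖) = 1
  rw [abs_one, norm_zero, mul_one, add_zero]
  exact max_eq_left ha

lemma fstL_norm {a : ℝ} (ha : |a| ≤ 1) : ‖fstL a‖ = 1 := by
  apply le_antisymm
  · exact LinearMap.mkContinuous_norm_le _ zero_le_one _
  · have h := (fstL a).le_opNorm (onePt a)
    rw [one_zero_norm ha, mul_one] at h
    calc (1:ℝ) = ‖fstL a (onePt a)‖ := by
          show (1:ℝ) = ‖(1:ℝ)‖; simp
      _ ≤ ‖fstL a‖ := h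

/-- perturbation: replace coordinate `n` of the second component by `s * (1 - |a| * |w.1|)` -/
def pert (a s : ℝ) (n : ℕ) (w : Esp a) : Esp a :=
  w + embL a ((s * (1 - |a| * |w.1|) - w.2 n) • eV n)

lemma pert_snd_le {a : ℝ} (ha : |a| ≤ 1) (s : ℝ) (hs : |s| = 1) (n : ℕ) (w : Esp a)
    (hw : ‖w‖ ≤ 1) : ‖(pert a s n w).2‖ ≤ 1 - |a| * |w.1| := by
  have ht : |w.1| ≤ 1 := (Esp.abs_fst_le w).trans hw
  have hby : |a| * |w.1| + ‖w.2‖ ≤ 1 := le_trans (le_max_right _ _) ((Esp.norm_def w) ▸ hw)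
  have hC : (0:ℝ) ≤ 1 - |a| * |w.1| := by nlinarith [abs_nonneg a]
  rw [BoundedContinuousFunction.norm_le hC]
  intro m
  have hval : (pert a s n w).2 m
      = w.2 m + (s * (1 - |a| * |w.1|) - w.2 n) * (if m = n then (1:ℝ) else 0) := by
    show (w.2 + (s * (1 - |a| * |w.1|) - w.2 n) • eV n) m = _
    simp
  rw [Real.norm_eq_abs, hval]
  by_cases h : m = n
  · subst h
    rw [if_pos rfl, mul_one]
    have : w.2 m + (s * (1 - |a| * |w.1|) - w.2 m) = s * (1 - |a| * |w.1|) := by ring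
    rw [this, abs_mul, hs, one_mul, abs_of_nonneg hC]
  · rw [if_neg h, mul_zero, add_zero]
    have := (w.2).norm_coe_le_norm m
    rw [Real.norm_eq_abs] at this
    linarith

lemma pert_norm_le {a : ℝ} (ha : |a| ≤ 1) (s : ℝ) (hs : |s| = 1) (n : ℕ) (w : Esp a)
    (hw : ‖w‖ ≤ 1) : ‖pert a s n w‖ ≤ 1 := by
  have ht : |w.1| ≤ 1 := (Esp.abs_fst_le w).trans hw
  have hfst : (pert a s n w).1 = w.1 := by
    show w.1 + (embL a _).1 = w.1
    rw [embL_fst, add_zero]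
  rw [Esp.norm_def, hfst]
  apply max_le ht
  have := pert_snd_le ha s hs n w hw
  nlinarith [abs_nonneg a, abs_nonneg w.1]

lemma pert_apply {a : ℝ} (g : Esp a →L[ℝ] ℝ) (s : ℝ) (n : ℕ) (w : Esp a) :
    g (pert a s n w) = g w + (s * (1 - |a| * |w.1|) - w.2 n) * g (embL a (eV n)) := by
  rw [pert, map_add, map_smul, map_smul, smul_eq_mul]

lemma pert_sub {a : ℝ} (n : ℕ) (w : Esp a) :
    pert a 1 n w - pert a (-1) n w = (2 * (1 - |a| * |w.1|)) • embL a (eV n) := by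
  rw [pert, pert, add_sub_add_left_eq_sub, map_smul, map_smul, ← sub_smul]
  congr 1
  ring

lemma lower_bound {a : ℝ} (ha : |a| ≤ 1) (C : Set (Esp a))
    (hC : IsConvexCombOfSlices (Esp a) C) : 2 * (1 - |a|) ≤ Metric.diam C := by
  obtain ⟨n, hn, lam, f, α, hlam, hsum, hf, hα, hCeq⟩ := hC
  choose w hw using fun i => slice_nonempty (f i) (hf i) (hα i)
  have hw1 : ∀ i, ‖w i‖ ≤ 1 := fun i => ((mem_slice_iff _ _ _).1 (hw i)).1
  have hw2 : ∀ i, 1 - α i < f i (w i) := fun i => ((mem_slice_iff _ _ _).1 (hw i)).2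
  have hev : ∀ᶠ m in Filter.atTop, ∀ i, |f i (embL a (eV m))| < (f i (w i) - (1 - α i)) / 2 := by
    rw [Filter.eventually_all]
    intro i
    exact (tendsto_coord (f i)).eventually_lt_const (by linarith [hw2 i])
  obtain ⟨m, hm⟩ := hev.exists
  have ht1 : ∀ i, |(w i).1| ≤ 1 := fun i => (Esp.abs_fst_le (w i)).trans (hw1 i)
  set d : Fin n → ℝ := fun i => 1 - |a| * |(w i).1| with hd
  have hdge : ∀ i, 1 - |a| ≤ d i := by
    intro i
    have := ht1 i
    simp only [hd]
    nlinarith [abs_nonneg a]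
  have hdnn : ∀ i, 0 ≤ d i := fun i => le_trans (by linarith) (hdge i)
  have hsnd : ∀ i, ‖(w i).2‖ ≤ d i := by
    intro i
    have hby : |a| * |(w i).1| + ‖(w i).2‖ ≤ 1 :=
      le_trans (le_max_right _ _) ((Esp.norm_def (w i)) ▸ (hw1 i))
    simp only [hd]
    linarith
  have hmem : ∀ (s : ℝ), |s| = 1 → ∀ i, pert a s m (w i) ∈ Slice (Esp a) (f i) (α i) := by
    intro s hs i
    rw [mem_slice_iff]
    refine ⟨pert_norm_le ha s hs m (w i) (hw1 i), ?_⟩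
    rw [pert_apply]
    have hc : |s * (1 - |a| * |(w i).1|) - (w i).2 m| ≤ 2 := by
      have h1 : |(w i).2 m| ≤ d i := by
        have := ((w i).2).norm_coe_le_norm m
        rw [Real.norm_eq_abs] at this
        linarith [hsnd i]
      have h2 : |s * (1 - |a| * |(w i).1|)| = d i := by
        rw [abs_mul, hs, one_mul, abs_of_nonneg (hdnn i)]
      calc |s * (1 - |a| * |(w i).1|) - (w i).2 m|
          ≤ |s * (1 - |a| * |(w i).1|)| + |(w i).2 m| := abs_sub _ _
        _ ≤ d i + d i := by rw [h2]; exact add_le_add le_rfl h1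
        _ ≤ 2 := by
            have h5 : d i ≤ 1 := by
              simp only [hd]
              nlinarith [mul_nonneg (abs_nonneg a) (abs_nonneg (w i).1)]
            linarith
    have hprod : |(s * (1 - |a| * |(w i).1|) - (w i).2 m) * f i (embL a (eV m))|
        ≤ 2 * |f i (embL a (eV m))| := by
      rw [abs_mul]
      exact mul_le_mul_of_nonneg_right hc (abs_nonneg _)
    have h3 := hm i
    have h4 := neg_abs_le ((s * (1 - |a| * |(w i).1|) - (w i).2 m) * f i (embL a (eV m)))
    linarith [abs_nonneg (f i (embL a (eV m)))]
  set wp : Fin n → Esp a := fun i => pert a 1 m (w i) with hwp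
  set wq : Fin n → Esp a := fun i => pert a (-1) m (w i) with hwq
  set zp := ∑ i, lam i • wp i with hzp
  set zq := ∑ i, lam i • wq i with hzq
  have hzpC : zp ∈ C := by
    rw [hCeq]
    exact ⟨wp, fun i => hmem 1 (by norm_num) i, rfl⟩
  have hzqC : zq ∈ C := by
    rw [hCeq]
    exact ⟨wq, fun i => hmem (-1) (by norm_num) i, rfl⟩
  have hdiff : zp - zq = (∑ i, lam i * (2 * d i)) • embL a (eV m) := by
    rw [hzp, hzq, ← Finset.sum_sub_distrib]
    have hterm : ∀ i : Fin n, lam i • wp i - lam i • wq i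
        = (lam i * (2 * d i)) • embL a (eV m) := by
      intro i
      rw [← smul_sub, hwp, hwq, pert_sub, smul_smul]
    rw [Finset.sum_congr rfl (fun i _ => hterm i), ← Finset.sum_smul]
  have hnn : (0:ℝ) ≤ ∑ i, lam i * (2 * d i) :=
    Finset.sum_nonneg fun i _ => mul_nonneg (hlam i) (by linarith [hdnn i])
  have hnorm : ‖zp - zq‖ = ∑ i, lam i * (2 * d i) := by
    rw [hdiff, norm_smul, norm_embL, eV_norm, mul_one, Real.norm_eq_abs, abs_of_nonneg hnn]
  have hge : 2 * (1 - |a|) ≤ ∑ i, lam i * (2 * d i) := by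
    calc 2 * (1 - |a|) = ∑ i, lam i * (2 * (1 - |a|)) := by
          rw [← Finset.sum_mul, hsum, one_mul]
      _ ≤ ∑ i, lam i * (2 * d i) := Finset.sum_le_sum fun i _ =>
          mul_le_mul_of_nonneg_left (by linarith [hdge i]) (hlam i)
  have hbdd : Bornology.IsBounded C := by
    apply (Metric.isBounded_closedBall (x := (0 : Esp a)) (r := 1)).subset
    rw [hCeq]
    rintro z ⟨v, hv, rfl⟩
    rw [Metric.mem_closedBall, dist_zero_right]
    calc ‖∑ i, lam i • v i‖ ≤ ∑ i, ‖lam i • v i‖ := norm_sum_le _ _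
      _ ≤ ∑ i, lam i := Finset.sum_le_sum fun i _ => by
          rw [norm_smul, Real.norm_eq_abs, abs_of_nonneg (hlam i)]
          nlinarith [((mem_slice_iff _ _ _).1 (hv i)).1, hlam i, norm_nonneg (v i)]
      _ = 1 := hsum
  calc 2 * (1 - |a|) ≤ ‖zp - zq‖ := by rw [hnorm]; exact hge
    _ = dist zp zq := (dist_eq_norm _ _).symm
    _ ≤ Metric.diam C := Metric.dist_le_diam_of_mem hbdd hzpC hzqC

lemma upper_bound {a : ℝ} (ha0 : 0 ≤ a) (ha1 : a ≤ 1) {α : ℝ} (hα0 : 0 < α) (hα1 : α ≤ 1) :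
    ∃ C : Set (Esp a), IsConvexCombOfSlices (Esp a) C ∧
      Metric.diam C ≤ 2 * (1 - a) + 3 * α := by
  have haa : |a| = a := abs_of_nonneg ha0
  refine ⟨_, ⟨1, one_pos, fun _ => 1, fun _ => fstL a, fun _ => α, fun _ => zero_le_one,
    by simp, fun _ => fstL_norm (by rw [haa]; linarith), fun _ => hα0, rfl⟩, ?_⟩
  apply Metric.diam_le_of_forall_dist_le (by linarith)
  rintro z ⟨u, hu, rfl⟩ z' ⟨v, hv, rfl⟩
  have hz : ∀ (u : Fin 1 → Esp a), ∑ i, (fun _ : Fin 1 => (1:ℝ)) i • u i = u 0 := by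
    intro u; rw [Fin.sum_univ_one, one_smul]
  rw [hz u, hz v, dist_eq_norm]
  obtain ⟨hu1, hu2⟩ := (mem_slice_iff _ _ _).1 (hu 0)
  obtain ⟨hv1, hv2⟩ := (mem_slice_iff _ _ _).1 (hv 0)
  rw [fstL_apply] at hu2 hv2
  have htu : |(u 0).1| ≤ 1 := (Esp.abs_fst_le _).trans hu1
  have htv : |(v 0).1| ≤ 1 := (Esp.abs_fst_le _).trans hv1
  have hyu : a * |(u 0).1| + ‖(u 0).2‖ ≤ 1 := by
    have := le_trans (le_max_right _ _) ((Esp.norm_def (u 0)) ▸ hu1)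
    rwa [haa] at this
  have hyv : a * |(v 0).1| + ‖(v 0).2‖ ≤ 1 := by
    have := le_trans (le_max_right _ _) ((Esp.norm_def (v 0)) ▸ hv1)
    rwa [haa] at this
  have habs_u : a * (1 - α) ≤ a * |(u 0).1| := by
    have : (u 0).1 ≤ |(u 0).1| := le_abs_self _
    nlinarith
  have habs_v : a * (1 - α) ≤ a * |(v 0).1| := by
    have : (v 0).1 ≤ |(v 0).1| := le_abs_self _
    nlinarith
  have hdt : |(u 0 - v 0).1| ≤ α := by
    have e : (u 0 - v 0).1 = (u 0).1 - (v 0).1 := rfl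
    rw [e, abs_sub_le_iff]
    constructor
    · have := le_abs_self (u 0).1
      linarith
    · have := le_abs_self (v 0).1
      linarith
  have hdy : ‖(u 0 - v 0).2‖ ≤ 2 - 2 * a + 2 * a * α := by
    have e : (u 0 - v 0).2 = (u 0).2 - (v 0).2 := rfl
    rw [e]
    calc ‖(u 0).2 - (v 0).2‖ ≤ ‖(u 0).2‖ + ‖(v 0).2‖ := norm_sub_le _ _
      _ ≤ 2 - 2 * a + 2 * a * α := by linarith
  rw [Esp.norm_def, haa]
  apply max_le
  · linarith
  · nlinarith


/-- For any `δ ∈ (1,2]` there is a Banach space in which every convex combination of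
slices of the unit ball has diameter at least `δ`, and `δ` is the infimum of such
diameters. -/
theorem exists_banach_min_diam_convexCombOfSlices (δ : ℝ) (h1 : 1 < δ) (h2 : δ ≤ 2) :
    ∃ (X : Type) (i₁ : NormedAddCommGroup X)
      (i₂ : @NormedSpace ℝ X _ i₁.toSeminormedAddCommGroup),
      @CompleteSpace X i₁.toUniformSpace ∧
      (∀ C : Set X, @IsConvexCombOfSlices X i₁ i₂ C → δ ≤ @Metric.diam X _ C) ∧
      (∀ γ : ℝ, δ < γ → ∃ C : Set X, @IsConvexCombOfSlices X i₁ i₂ C ∧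
        @Metric.diam X _ C < γ) := by
  set a : ℝ := 1 - δ / 2 with hadef
  have ha0 : 0 ≤ a := by rw [hadef]; linarith
  have ha1 : a ≤ 1 := by rw [hadef]; linarith
  have haa : |a| = a := abs_of_nonneg ha0
  have h2a : 2 * (1 - a) = δ := by rw [hadef]; ring
  refine ⟨Esp a, EspNACG a, EspNS a, Esp.complete a, ?_, ?_⟩
  · intro C hC
    have hlb := lower_bound (a := a) (by rw [haa]; linarith) C hC
    rw [haa] at hlb
    linarith
  · intro γ hγ
    set α : ℝ := min 1 ((γ - δ) / 4) with hα
    have hα0 : 0 < α := lt_min one_pos (by linarith)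
    have hα1 : α ≤ 1 := min_le_left _ _
    obtain ⟨C, hC, hdiam⟩ := upper_bound ha0 ha1 hα0 hα1
    refine ⟨C, hC, ?_⟩
    have h3 : α ≤ (γ - δ) / 4 := min_le_right _ _
    linarith
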